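/- Almost surely, for every pair of points (m,s) ≤ (n,t) in ℤ × ℝ, there exist leftmost and rightmost geodesics for Brownian last-passage percolation: there are maximizing sequences s^L, s^R ∈ Π_{(m,s),(n,t)} of the energy E(s_{m,n}) = Σ_{r=m}^n B_r(s_{r-1}, s_r) such that any maximizing sequence s satisfies s_r^L ≤ s_r ≤ s_r^R for all m ≤ r ≤ n. -/

import Mathlib

open MeasureTheory ProbabilityTheory Filter Set

/-- A two-sided standard Brownian motion. -/
def IsTwoSidedStdBM {Ω : Type*} [MeasurableSpace Ω] (P : Measure Ω)
    (W : ℝ → Ω → ℝ) : Prop :=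
  (∀ t, Measurable (W t)) ∧
  (∀ᵐ ω ∂P, W 0 ω = 0 ∧ Continuous fun t => W t ω) ∧
  (∀ (n : ℕ) (t : Fin (n + 1) → ℝ), Monotone t →
    iIndepFun
      (fun i : Fin n => fun ω => W (t i.succ) ω - W (t i.castSucc) ω) P) ∧
  (∀ s t : ℝ, s ≤ t →
    P.map (fun ω => W t ω - W s ω) = gaussianReal 0 ((t - s).toNNReal))

/-- A sequence `σ : ℤ → ℝ` encodes an up-right path from `(m,s)` to `(n,t)` via its
jump times: `σ (m-1) = s`, `σ n = t`, and `σ` is nondecreasing on `[m-1, n]`. -/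
def IsPath (m n : ℤ) (s t : ℝ) (σ : ℤ → ℝ) : Prop :=
  σ (m - 1) = s ∧ σ n = t ∧ ∀ r : ℤ, m - 1 ≤ r → r < n → σ r ≤ σ (r + 1)

/-- The energy `Σ_{r=m}^n B_r(σ_{r-1}, σ_r)` of a path in the environment `X`. -/
noncomputable def energy (X : ℤ → ℝ → ℝ) (m n : ℤ) (σ : ℤ → ℝ) : ℝ :=
  ∑ r ∈ Finset.Icc m n, (X r (σ r) - X r (σ (r - 1)))

section Aux

variable {m n : ℤ} {s t : ℝ}

lemma path_mono {σ : ℤ → ℝ} (h : IsPath m n s t σ) {a b : ℤ}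
    (ha : m - 1 ≤ a) (hb : b ≤ n) (hab : a ≤ b) : σ a ≤ σ b := by
  obtain ⟨-, -, hstep⟩ := h
  refine Int.le_induction (motive := fun b _ => b ≤ n → σ a ≤ σ b) (fun _ => le_rfl)
    (fun b hab ih hb => ?_) b hab hb
  exact (ih (by omega)).trans (hstep b (by omega) (by omega))

lemma energy_congr {X : ℤ → ℝ → ℝ} {σ σ' : ℤ → ℝ}
    (h : ∀ r, m - 1 ≤ r → r ≤ n → σ r = σ' r) :
    energy X m n σ = energy X m n σ' := by
  unfold energy
  refine Finset.sum_congr rfl fun r hr => ?_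
  rw [Finset.mem_Icc] at hr
  rw [h r (by omega) hr.2, h (r - 1) (by omega) (by omega)]

lemma energy_inf_add_sup (X : ℤ → ℝ → ℝ) (σ σ' : ℤ → ℝ) :
    energy X m n (σ ⊓ σ') + energy X m n (σ ⊔ σ') = energy X m n σ + energy X m n σ' := by
  unfold energy
  rw [← Finset.sum_add_distrib, ← Finset.sum_add_distrib]
  refine Finset.sum_congr rfl fun r _ => ?_
  simp only [Pi.inf_apply, Pi.sup_apply]
  have key : ∀ a b : ℝ, X r (a ⊓ b) + X r (a ⊔ b) = X r a + X r b := by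
    intro a b
    rcases le_total a b with h | h
    · rw [inf_eq_left.2 h, sup_eq_right.2 h]
    · rw [inf_eq_right.2 h, sup_eq_left.2 h]; ring
  have h1 := key (σ r) (σ' r)
  have h2 := key (σ (r - 1)) (σ' (r - 1))
  linarith

lemma isPath_inf {σ σ' : ℤ → ℝ} (h : IsPath m n s t σ) (h' : IsPath m n s t σ') :
    IsPath m n s t (σ ⊓ σ') := by
  refine ⟨?_, ?_, fun r h1 h2 => ?_⟩
  · simp [Pi.inf_apply, h.1, h'.1]
  · simp [Pi.inf_apply, h.2.1, h'.2.1]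
  · exact inf_le_inf (h.2.2 r h1 h2) (h'.2.2 r h1 h2)

lemma isPath_sup {σ σ' : ℤ → ℝ} (h : IsPath m n s t σ) (h' : IsPath m n s t σ') :
    IsPath m n s t (σ ⊔ σ') := by
  refine ⟨?_, ?_, fun r h1 h2 => ?_⟩
  · simp [Pi.sup_apply, h.1, h'.1]
  · simp [Pi.sup_apply, h.2.1, h'.2.1]
  · exact sup_le_sup (h.2.2 r h1 h2) (h'.2.2 r h1 h2)

end Aux

/-- Lemma 2.2: almost surely, for every pair of points `(m,s) ≤ (n,t)` in `ℤ × ℝ`,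
there exist leftmost and rightmost geodesics in Brownian last-passage percolation:
maximizing paths `σL, σR` such that every maximizing path `σ` satisfies
`σL r ≤ σ r ≤ σR r` for `m ≤ r ≤ n`. -/
theorem leftmost_rightmost_geodesics {Ω : Type*} [MeasurableSpace Ω]
    (P : Measure Ω) [IsProbabilityMeasure P]
    (B : ℤ → ℝ → Ω → ℝ)
    (hBM : ∀ r : ℤ, IsTwoSidedStdBM P (B r))
    (hindep : iIndepFun
      (fun r : ℤ => fun ω => fun t : ℝ => B r t ω) P) :
    ∀ᵐ ω ∂P, ∀ (m n : ℤ) (s t : ℝ), m ≤ n → s ≤ t →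
      ∃ σL σR : ℤ → ℝ,
        IsPath m n s t σL ∧ IsPath m n s t σR ∧
        (∀ σ, IsPath m n s t σ →
          energy (fun r x => B r x ω) m n σ ≤ energy (fun r x => B r x ω) m n σL) ∧
        (∀ σ, IsPath m n s t σ →
          energy (fun r x => B r x ω) m n σ ≤ energy (fun r x => B r x ω) m n σR) ∧
        (∀ σ, IsPath m n s t σ →
          (∀ σ', IsPath m n s t σ' →
            energy (fun r x => B r x ω) m n σ' ≤ energy (fun r x => B r x ω) m n σ) →
          ∀ r : ℤ, m ≤ r → r ≤ n → σL r ≤ σ r ∧ σ r ≤ σR r) := by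
  have h1 : ∀ᵐ ω ∂P, ∀ r : ℤ, Continuous fun x => B r x ω :=
    ae_all_iff.2 fun r => ((hBM r).2.1).mono fun ω h => h.2
  filter_upwards [h1] with ω hω m n s t hmn hst
  set X : ℤ → ℝ → ℝ := fun r x => B r x ω with hXdef
  have hXc : ∀ r, Continuous (X r) := hω
  -- the compact set of "canonical" paths
  set K : Set (ℤ → ℝ) := (Set.pi Set.univ fun _ : ℤ => Icc s t) ∩
      {σ | IsPath m n s t σ ∧ (∀ r, r < m - 1 → σ r = s) ∧ (∀ r, n < r → σ r = t)}
    with hKdef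
  have hC : IsClosed {σ : ℤ → ℝ | IsPath m n s t σ ∧ (∀ r, r < m - 1 → σ r = s) ∧
      (∀ r, n < r → σ r = t)} := by
    have heq : {σ : ℤ → ℝ | IsPath m n s t σ ∧ (∀ r, r < m - 1 → σ r = s) ∧
        (∀ r, n < r → σ r = t)} =
        ({σ : ℤ → ℝ | σ (m - 1) = s} ∩ {σ | σ n = t} ∩
          (⋂ r : ℤ, {σ | m - 1 ≤ r → r < n → σ r ≤ σ (r + 1)}) ∩
          (⋂ r : ℤ, {σ | r < m - 1 → σ r = s}) ∩
          (⋂ r : ℤ, {σ | n < r → σ r = t})) := by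
      ext σ
      simp only [IsPath, mem_setOf_eq, mem_inter_iff, mem_iInter]
      tauto
    rw [heq]
    refine ((((isClosed_eq (continuous_apply _) continuous_const).inter
        (isClosed_eq (continuous_apply _) continuous_const)).inter
        (isClosed_iInter fun r => ?_)).inter
        (isClosed_iInter fun r => ?_)).inter
        (isClosed_iInter fun r => ?_)
    · by_cases h2 : m - 1 ≤ r ∧ r < n
      · have : {σ : ℤ → ℝ | m - 1 ≤ r → r < n → σ r ≤ σ (r + 1)} =
            {σ | σ r ≤ σ (r + 1)} := by ext σ; simp [h2.1, h2.2]
        rw [this]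
        exact isClosed_le (continuous_apply r) (continuous_apply (r + 1))
      · have : {σ : ℤ → ℝ | m - 1 ≤ r → r < n → σ r ≤ σ (r + 1)} = univ := by
          ext σ
          simp only [mem_setOf_eq, mem_univ, iff_true]
          intro ha hb
          exact absurd ⟨ha, hb⟩ h2
        rw [this]; exact isClosed_univ
    · by_cases h2 : r < m - 1
      · have : {σ : ℤ → ℝ | r < m - 1 → σ r = s} = {σ | σ r = s} := by ext σ; simp [h2]
        rw [this]; exact isClosed_eq (continuous_apply r) continuous_const
      · have : {σ : ℤ → ℝ | r < m - 1 → σ r = s} = univ := by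
          ext σ; simp only [mem_setOf_eq, mem_univ, iff_true]; intro ha; exact absurd ha h2
        rw [this]; exact isClosed_univ
    · by_cases h2 : n < r
      · have : {σ : ℤ → ℝ | n < r → σ r = t} = {σ | σ r = t} := by ext σ; simp [h2]
        rw [this]; exact isClosed_eq (continuous_apply r) continuous_const
      · have : {σ : ℤ → ℝ | n < r → σ r = t} = univ := by
          ext σ; simp only [mem_setOf_eq, mem_univ, iff_true]; intro ha; exact absurd ha h2
        rw [this]; exact isClosed_univ
  have hK : IsCompact K := (isCompact_univ_pi fun _ => isCompact_Icc).inter_right hC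
  -- K is nonempty
  have hσ0 : (fun r : ℤ => if r ≤ m - 1 then s else t) ∈ K := by
    constructor
    · intro r _
      by_cases h : r ≤ m - 1 <;> simp [h, hst, left_mem_Icc, right_mem_Icc]
    · refine ⟨⟨by simp, ?_, fun r h1 h2 => ?_⟩, fun r h => ?_, fun r h => ?_⟩
      · show (if n ≤ m - 1 then s else t) = t
        rw [if_neg (by omega)]
      · show (if r ≤ m - 1 then s else t) ≤ (if r + 1 ≤ m - 1 then s else t)
        split_ifs <;> first | exact le_rfl | exact hst | omega
      · show (if r ≤ m - 1 then s else t) = s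
        rw [if_pos (by omega)]
      · show (if r ≤ m - 1 then s else t) = t
        rw [if_neg (by omega)]
  have hKne : K.Nonempty := ⟨_, hσ0⟩
  -- energy is continuous
  have hEc : Continuous fun σ : ℤ → ℝ => energy X m n σ := by
    unfold energy
    exact continuous_finset_sum _ fun r _ =>
      ((hXc r).comp (continuous_apply r)).sub ((hXc r).comp (continuous_apply (r - 1)))
  obtain ⟨σ0, hσ0K, hσ0max⟩ := hK.exists_isMaxOn hKne hEc.continuousOn
  set L : ℝ := energy X m n σ0 with hLdef
  have hmaxK : ∀ σ ∈ K, energy X m n σ ≤ L := fun σ hσ => hσ0max hσ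
  -- canonicalization of arbitrary paths
  have hcan : ∀ σ, IsPath m n s t σ → ∃ σ'' ∈ K, ∀ r, m - 1 ≤ r → r ≤ n → σ'' r = σ r := by
    intro σ hσ
    set σ'' : ℤ → ℝ := fun r => if r < m then s else if n ≤ r then t else σ r with hσ''def
    have hag : ∀ r, m - 1 ≤ r → r ≤ n → σ'' r = σ r := by
      intro r h1 h2
      show (if r < m then s else if n ≤ r then t else σ r) = σ r
      by_cases hr1 : r < m
      · have hσr : σ r = s := by rw [show r = m - 1 by omega, hσ.1]
        rw [if_pos hr1, hσr]
      · by_cases hr2 : n ≤ r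
        · have hσr : σ r = t := by rw [show r = n by omega, hσ.2.1]
          rw [if_neg hr1, if_pos hr2, hσr]
        · rw [if_neg hr1, if_neg hr2]
    refine ⟨σ'', ⟨?_, ?_, fun r h => ?_, fun r h => ?_⟩, hag⟩
    · intro r _
      show (if r < m then s else if n ≤ r then t else σ r) ∈ Icc s t
      by_cases hr1 : r < m
      · simp [hr1, hst]
      · by_cases hr2 : n ≤ r
        · simp [hr1, hr2, hst]
        · rw [if_neg hr1, if_neg hr2]
          constructor
          · rw [← hσ.1]; exact path_mono hσ le_rfl (by omega) (by omega)
          · rw [← hσ.2.1]; exact path_mono hσ (by omega) le_rfl (by omega)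
    · refine ⟨?_, ?_, fun r h1 h2 => ?_⟩
      · rw [hag (m - 1) le_rfl (by omega), hσ.1]
      · rw [hag n (by omega) le_rfl, hσ.2.1]
      · rw [hag r h1 (by omega), hag (r + 1) (by omega) (by omega)]
        exact hσ.2.2 r h1 h2
    · show (if r < m then s else if n ≤ r then t else σ r) = s
      rw [if_pos (show r < m by omega)]
    · show (if r < m then s else if n ≤ r then t else σ r) = t
      rw [if_neg (by omega), if_pos (by omega)]
  -- K is closed under lattice operations
  have hKlat : ∀ σ ∈ K, ∀ σ' ∈ K, σ ⊓ σ' ∈ K ∧ σ ⊔ σ' ∈ K := by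
    intro σ hσ σ' hσ'
    obtain ⟨hσpi, hσp, hσl, hσr⟩ := hσ
    obtain ⟨hσ'pi, hσ'p, hσ'l, hσ'r⟩ := hσ'
    constructor
    · refine ⟨fun r _ => ?_, isPath_inf hσp hσ'p, fun r h => ?_, fun r h => ?_⟩
      · have h1 := hσpi r (mem_univ r)
        have h2 := hσ'pi r (mem_univ r)
        exact ⟨le_min h1.1 h2.1, (min_le_left _ _).trans h1.2⟩
      · show min (σ r) (σ' r) = s; rw [hσl r h, hσ'l r h, min_self]
      · show min (σ r) (σ' r) = t; rw [hσr r h, hσ'r r h, min_self]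
    · refine ⟨fun r _ => ?_, isPath_sup hσp hσ'p, fun r h => ?_, fun r h => ?_⟩
      · have h1 := hσpi r (mem_univ r)
        have h2 := hσ'pi r (mem_univ r)
        exact ⟨h1.1.trans (le_max_left _ _), max_le h1.2 h2.2⟩
      · show max (σ r) (σ' r) = s; rw [hσl r h, hσ'l r h, max_self]
      · show max (σ r) (σ' r) = t; rw [hσr r h, hσ'r r h, max_self]
  -- the set of maximizers in K
  set M : Set (ℤ → ℝ) := K ∩ {σ | L ≤ energy X m n σ} with hMdef
  have hM : IsCompact M := hK.inter_right (isClosed_le continuous_const hEc)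
  have hσ0M : σ0 ∈ M := ⟨hσ0K, show L ≤ energy X m n σ0 from le_rfl⟩
  have hMinf : ∀ σ ∈ M, ∀ σ' ∈ M, σ ⊓ σ' ∈ M := by
    intro σ hσ σ' hσ'
    have hl := hKlat σ hσ.1 σ' hσ'.1
    have hE := energy_inf_add_sup (m := m) (n := n) X σ σ'
    have h2 : energy X m n (σ ⊔ σ') ≤ L := hmaxK _ hl.2
    have h3 : L ≤ energy X m n σ := hσ.2
    have h4 : L ≤ energy X m n σ' := hσ'.2
    exact ⟨hl.1, by simp only [mem_setOf_eq]; linarith⟩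
  have hMsup : ∀ σ ∈ M, ∀ σ' ∈ M, σ ⊔ σ' ∈ M := by
    intro σ hσ σ' hσ'
    have hl := hKlat σ hσ.1 σ' hσ'.1
    have hE := energy_inf_add_sup (m := m) (n := n) X σ σ'
    have h2 : energy X m n (σ ⊓ σ') ≤ L := hmaxK _ hl.1
    have h3 : L ≤ energy X m n σ := hσ.2
    have h4 : L ≤ energy X m n σ' := hσ'.2
    exact ⟨hl.2, by simp only [mem_setOf_eq]; linarith⟩
  -- coordinatewise minimizers and maximizers over M
  have hexmin : ∀ r : ℤ, ∃ τ, τ ∈ M ∧ ∀ σ' ∈ M, τ r ≤ σ' r := by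
    intro r
    obtain ⟨τ, hτM, hτ⟩ := hM.exists_isMinOn ⟨σ0, hσ0M⟩ (continuous_apply r).continuousOn
    exact ⟨τ, hτM, fun σ' hσ' => hτ hσ'⟩
  have hexmax : ∀ r : ℤ, ∃ τ, τ ∈ M ∧ ∀ σ' ∈ M, σ' r ≤ τ r := by
    intro r
    obtain ⟨τ, hτM, hτ⟩ := hM.exists_isMaxOn ⟨σ0, hσ0M⟩ (continuous_apply r).continuousOn
    exact ⟨τ, hτM, fun σ' hσ' => hτ hσ'⟩
  choose τL hτLM hτLmin using hexmin
  choose τR hτRM hτRmax using hexmax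
  have hne : (Finset.Icc m n).Nonempty := Finset.nonempty_Icc.2 hmn
  set σL : ℤ → ℝ := (Finset.Icc m n).inf' hne τL with hσLdef
  set σR : ℤ → ℝ := (Finset.Icc m n).sup' hne τR with hσRdef
  have hσLM : σL ∈ M :=
    Finset.inf'_induction hne τL (p := (· ∈ M)) (fun a ha b hb => hMinf a ha b hb)
      (fun b _ => hτLM b)
  have hσRM : σR ∈ M :=
    Finset.sup'_induction hne τR (p := (· ∈ M)) (fun a ha b hb => hMsup a ha b hb)
      (fun b _ => hτRM b)
  have hupper : ∀ σ, IsPath m n s t σ → energy X m n σ ≤ L := by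
    intro σ hσ
    obtain ⟨σ'', hσ''K, hag⟩ := hcan σ hσ
    calc energy X m n σ = energy X m n σ'' := (energy_congr hag).symm
      _ ≤ L := hmaxK _ hσ''K
  refine ⟨σL, σR, hσLM.1.2.1, hσRM.1.2.1, ?_, ?_, ?_⟩
  · intro σ hσ
    exact (hupper σ hσ).trans hσLM.2
  · intro σ hσ
    exact (hupper σ hσ).trans hσRM.2
  · intro σ hσ hσmax r hmr hrn
    obtain ⟨σ'', hσ''K, hag⟩ := hcan σ hσ
    have hσ''M : σ'' ∈ M := by
      refine ⟨hσ''K, ?_⟩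
      show L ≤ energy X m n σ''
      rw [energy_congr hag]
      exact hσmax σ0 hσ0K.2.1
    have hrmem : r ∈ Finset.Icc m n := Finset.mem_Icc.2 ⟨hmr, hrn⟩
    constructor
    · have h1 : σL ≤ τL r := Finset.inf'_le τL hrmem
      have h2 : τL r r ≤ σ'' r := hτLmin r σ'' hσ''M
      have h3 : σ'' r = σ r := hag r (by omega) hrn
      exact (h1 r).trans (h3 ▸ h2)
    · have h1 : τR r ≤ σR := Finset.le_sup' τR hrmem
      have h2 : σ'' r ≤ τR r r := hτRmax r σ'' hσ''M
      have h3 : σ'' r = σ r := hag r (by omega) hrn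
      exact (h3 ▸ h2).trans (h1 r)
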